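/- For every integer k ≥ 2 and every ε ∈ (0, 1] there exist a constant c > 0 and λ₀ ≥ 1 such that for every λ ≥ λ₀, every θ ∈ [0, 1/100] and every w ∈ [1/4, 3/4], the set Ω(θ, w; λ, ε) is Lebesgue measurable and |Ω(θ, w; λ, ε)| ≥ c · λ^{k(k+1)(k+2)/6}. -/
import Mathlib


open MeasureTheory Real Set
open scoped ENNReal

noncomputable section

/-- Index set for multi-indices `β = (β₁, β₂) ∈ ℕ²` with `1 ≤ β₁ + β₂ ≤ k`;
its cardinality is `N = (k+1)(k+2)/2 − 1`. -/
def Idx (k : ℕ) : Type :=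
  {β : Fin (k + 1) × Fin (k + 1) // 1 ≤ (β.1 : ℕ) + (β.2 : ℕ) ∧ (β.1 : ℕ) + (β.2 : ℕ) ≤ k}

instance (k : ℕ) : Fintype (Idx k) := by unfold Idx; infer_instance

/-- The phase polynomial `P(ξ; x) = ∑_{1 ≤ |β| ≤ k} x_β ξ₁^{β₁} ξ₂^{β₂}`. -/
def Pphase (k : ℕ) (x : Idx k → ℝ) (ξ : Fin 2 → ℝ) : ℝ :=
  ∑ β : Idx k, x β * ξ 0 ^ (β.1.1 : ℕ) * ξ 1 ^ (β.1.2 : ℕ)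

/-- `E_k1(x) = ∫_{[0,1]²} e(P(ξ; x)) dξ` with `e(t) = exp(2πit)`. -/
def Eone (k : ℕ) (x : Idx k → ℝ) : ℂ :=
  ∫ ξ in Icc (0 : Fin 2 → ℝ) 1, Complex.exp (2 * Real.pi * Complex.I * (Pphase k x ξ))

/-- The index `β = (k, 0)`, so that `x₁ = x_{(k,0)}` is the coefficient of `ξ₁^k`. -/
def idxTop (k : ℕ) (hk : 1 ≤ k) : Idx k :=
  ⟨(⟨k, Nat.lt_succ_self k⟩, ⟨0, Nat.succ_pos k⟩), by constructor <;> simp [hk]⟩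

/-- `γ_{k′}(·; x, θ, w)`: the coefficient of `u^{k′}` in the polynomial
`u ↦ P(u − θξ₂ + w, ξ₂; x)`, as a polynomial in `ξ₂` (of degree ≤ k − k′);
equivalently, `P(ξ₁, ξ₂; x) = Σ_{k′=0}^{k} γ_{k′}(ξ₂; x, θ, w) (ξ₁ + θξ₂ − w)^{k′}`.
We work in `ℝ[S][U]`, with `U` the outer variable (standing for `ξ₁ + θξ₂ − w`)
and `S` the inner one (standing for `ξ₂`). -/
def gam (k : ℕ) (x : Idx k → ℝ) (θ w : ℝ) (k' : ℕ) : Polynomial ℝ :=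
  Polynomial.coeff
    (∑ β : Idx k, Polynomial.C (Polynomial.C (x β)) *
      (Polynomial.X - Polynomial.C (Polynomial.C θ * Polynomial.X - Polynomial.C w))
          ^ (β.1.1 : ℕ) *
      Polynomial.C (Polynomial.X ^ (β.1.2 : ℕ)))
    k'

/-- `‖γ‖`, the sum of the absolute values of the coefficients of a real polynomial. -/
def norm1 (γ : Polynomial ℝ) : ℝ := ∑ i ∈ γ.support, |γ.coeff i|

/-- The set `Ω(θ, w; λ, ε)` of (6.4):
`{x : λ^k ≤ x₁ ≤ (2λ)^k, ‖γ_{k′}(·;x,θ,w)‖ ≤ ε λ^{k′} (1 ≤ k′ ≤ k−1),`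
`‖γ₀(·;x,θ,w) − γ₀(0;x,θ,w)‖ ≤ ε}`. -/
def Omegaset (k : ℕ) (hk : 1 ≤ k) (θ w lam ε : ℝ) : Set (Idx k → ℝ) :=
  {x | lam ^ k ≤ x (idxTop k hk) ∧ x (idxTop k hk) ≤ (2 * lam) ^ k ∧
    (∀ k' : ℕ, 1 ≤ k' → k' ≤ k - 1 → norm1 (gam k x θ w k') ≤ ε * lam ^ k') ∧
    norm1 (gam k x θ w 0 -
      Polynomial.C (Polynomial.eval 0 (gam k x θ w 0))) ≤ ε}
namespace OmegaProof

open Polynomial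

instance (k : ℕ) : DecidableEq (Idx k) := by unfold Idx; infer_instance

/-- Matrix entry: coefficient of `u^{a₁} ξ₂^{a₂}` in `(u - θξ₂ + w)^{b₁} ξ₂^{b₂}`. -/
def mEnt (θ w : ℝ) (a₁ a₂ b₁ b₂ : ℕ) : ℝ :=
  ((((Polynomial.X : Polynomial (Polynomial ℝ)) -
      Polynomial.C (Polynomial.C θ * Polynomial.X - Polynomial.C w)) ^ b₁ *
      Polynomial.C (Polynomial.X ^ b₂)).coeff a₁).coeff a₂

lemma mEnt_eq (θ w : ℝ) (a₁ a₂ b₁ b₂ : ℕ) :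
    mEnt θ w a₁ a₂ b₁ b₂ =
      (if b₂ ≤ a₂ then
        ((Polynomial.C w - Polynomial.C θ * Polynomial.X : Polynomial ℝ) ^ (b₁ - a₁)).coeff
          (a₂ - b₂)
       else 0) * (b₁.choose a₁ : ℝ) := by
  have h1 : (Polynomial.X : Polynomial (Polynomial ℝ)) -
      Polynomial.C (Polynomial.C θ * Polynomial.X - Polynomial.C w)
      = Polynomial.X + Polynomial.C (Polynomial.C w - Polynomial.C θ * Polynomial.X) := by
    rw [map_sub, map_sub]; ring
  rw [mEnt, h1, Polynomial.coeff_mul_C, Polynomial.coeff_X_add_C_pow, mul_right_comm,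
    Polynomial.coeff_mul_natCast, Polynomial.coeff_mul_X_pow']

lemma q_pow_coeff_zero (θ w : ℝ) {n j : ℕ} (h : n < j) :
    ((Polynomial.C w - Polynomial.C θ * Polynomial.X : Polynomial ℝ) ^ n).coeff j = 0 := by
  apply Polynomial.coeff_eq_zero_of_natDegree_lt
  have h1 : (Polynomial.C w - Polynomial.C θ * Polynomial.X : Polynomial ℝ).natDegree ≤ 1 := by
    refine le_trans (Polynomial.natDegree_sub_le _ _) ?_
    simp only [Polynomial.natDegree_C, max_le_iff]
    exact ⟨Nat.zero_le 1, le_trans (Polynomial.natDegree_mul_le)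
      (by simp [Polynomial.natDegree_X])⟩
  calc ((Polynomial.C w - Polynomial.C θ * Polynomial.X : Polynomial ℝ) ^ n).natDegree
      ≤ n * (Polynomial.C w - Polynomial.C θ * Polynomial.X : Polynomial ℝ).natDegree :=
        Polynomial.natDegree_pow_le
    _ ≤ n * 1 := Nat.mul_le_mul_left n h1
    _ < j := by omega

lemma mEnt_diag (θ w : ℝ) (b₁ b₂ : ℕ) : mEnt θ w b₁ b₂ b₁ b₂ = 1 := by
  rw [mEnt_eq]; simp

lemma mEnt_zero₁ (θ w : ℝ) {a₁ b₁ : ℕ} (h : b₁ < a₁) (a₂ b₂ : ℕ) :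
    mEnt θ w a₁ a₂ b₁ b₂ = 0 := by
  rw [mEnt_eq, Nat.choose_eq_zero_of_lt h]; simp

lemma mEnt_zero₂ (θ w : ℝ) {a₁ a₂ b₁ b₂ : ℕ} (h1 : a₁ = b₁) (h2 : a₂ ≠ b₂) :
    mEnt θ w a₁ a₂ b₁ b₂ = 0 := by
  subst h1
  rw [mEnt_eq, Nat.sub_self, pow_zero]
  split_ifs with h
  · rw [Polynomial.coeff_one, if_neg (by omega), zero_mul]
  · rw [zero_mul]

lemma mEnt_zero₃ (θ w : ℝ) {a₁ a₂ b₁ b₂ : ℕ} (h : b₁ + b₂ < a₁ + a₂) :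
    mEnt θ w a₁ a₂ b₁ b₂ = 0 := by
  rcases Nat.lt_or_ge b₁ a₁ with h1 | h1
  · exact mEnt_zero₁ θ w h1 a₂ b₂
  · rw [mEnt_eq]
    split_ifs with h2
    · rw [q_pow_coeff_zero θ w (by omega), zero_mul]
    · rw [zero_mul]

def Mmat (k : ℕ) (θ w : ℝ) : Matrix (Idx k) (Idx k) ℝ :=
  Matrix.of fun α β => mEnt θ w (α.1.1 : ℕ) (α.1.2 : ℕ) (β.1.1 : ℕ) (β.1.2 : ℕ)

lemma gam_coeff (k : ℕ) (x : Idx k → ℝ) (θ w : ℝ) (k' j : ℕ) :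
    (gam k x θ w k').coeff j
      = ∑ β : Idx k, mEnt θ w k' j (β.1.1 : ℕ) (β.1.2 : ℕ) * x β := by
  unfold gam mEnt
  simp only [Polynomial.finset_sum_coeff, mul_assoc, Polynomial.coeff_C_mul]
  exact Finset.sum_congr rfl fun β _ => mul_comm _ _

lemma mulVec_eq (k : ℕ) (θ w : ℝ) (x : Idx k → ℝ) (α : Idx k) :
    (Mmat k θ w).mulVec x α = (gam k x θ w (α.1.1 : ℕ)).coeff (α.1.2 : ℕ) := by
  rw [gam_coeff]; rfl

lemma gam_coeff_zero (k : ℕ) (x : Idx k → ℝ) (θ w : ℝ) {k' j : ℕ} (h : k < k' + j) :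
    (gam k x θ w k').coeff j = 0 := by
  rw [gam_coeff]
  refine Finset.sum_eq_zero fun β _ => ?_
  rw [mEnt_zero₃ θ w (by have := β.2.2; omega), zero_mul]

lemma norm1_eq_sum (γ : Polynomial ℝ) (s : Finset ℕ) (h : ∀ j ∉ s, γ.coeff j = 0) :
    norm1 γ = ∑ j ∈ s, |γ.coeff j| := by
  rw [norm1]
  apply Finset.sum_subset
  · intro j hj
    by_contra hj2
    exact Polynomial.mem_support_iff.mp hj (h j hj2)
  · intro j _ hj
    rw [Polynomial.notMem_support_iff.mp hj, abs_zero]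

lemma norm1_gam_eq (k : ℕ) (x : Idx k → ℝ) (θ w : ℝ) (k' : ℕ) :
    norm1 (gam k x θ w k') = ∑ j ∈ Finset.range (k + 1), |(gam k x θ w k').coeff j| :=
  norm1_eq_sum _ _ fun j hj =>
    gam_coeff_zero k x θ w (by simp only [Finset.mem_range] at hj; omega)

lemma norm1_gam0_eq (k : ℕ) (x : Idx k → ℝ) (θ w : ℝ) :
    norm1 (gam k x θ w 0 - Polynomial.C (Polynomial.eval 0 (gam k x θ w 0)))
      = ∑ j ∈ Finset.Icc 1 k, |(gam k x θ w 0).coeff j| := by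
  have h0 : ∀ j, (gam k x θ w 0 - Polynomial.C (Polynomial.eval 0 (gam k x θ w 0))).coeff j
      = if j = 0 then 0 else (gam k x θ w 0).coeff j := by
    intro j
    rcases eq_or_ne j 0 with rfl | hj
    · simp [Polynomial.coeff_sub, Polynomial.coeff_C, Polynomial.coeff_zero_eq_eval_zero]
    · simp [Polynomial.coeff_sub, Polynomial.coeff_C, hj]
  rw [norm1_eq_sum _ (Finset.Icc 1 k) ?_]
  · exact Finset.sum_congr rfl fun j hj => by
      rw [h0, if_neg (by simp only [Finset.mem_Icc] at hj; omega)]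
  · intro j hj
    simp only [Finset.mem_Icc, not_and, not_le] at hj
    rw [h0]
    rcases eq_or_ne j 0 with rfl | hj0
    · simp
    · rw [if_neg hj0]
      exact gam_coeff_zero k x θ w (by omega)

lemma measurable_gam_coeff (k : ℕ) (θ w : ℝ) (k' j : ℕ) :
    Measurable (fun x : Idx k → ℝ => (gam k x θ w k').coeff j) := by
  simp only [gam_coeff]
  exact Finset.measurable_sum _ fun β _ => (measurable_pi_apply β).const_mul _

lemma six_mul_sum (k : ℕ) :
    6 * ∑ a ∈ Finset.range (k + 1), a * (k + 1 - a) = k * (k + 1) * (k + 2) := by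
  induction k with
  | zero => simp
  | succ n ih =>
    have hsplit : ∑ a ∈ Finset.range (n + 2), a * (n + 2 - a)
        = (∑ a ∈ Finset.range (n + 1), a * (n + 1 - a))
          + (∑ a ∈ Finset.range (n + 1), a) + (n + 1) := by
      rw [Finset.sum_range_succ]
      have h1 : ∑ a ∈ Finset.range (n + 1), a * (n + 2 - a)
          = ∑ a ∈ Finset.range (n + 1), (a * (n + 1 - a) + a) := by
        refine Finset.sum_congr rfl fun a ha => ?_
        have h2 : a ≤ n := by simpa [Nat.lt_succ_iff] using Finset.mem_range.mp ha
        have h3 : n + 2 - a = (n + 1 - a) + 1 := by omega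
        rw [h3, Nat.mul_succ]
      rw [h1, Finset.sum_add_distrib]
      have h4 : n + 2 - (n + 1) = 1 := by omega
      rw [h4, Nat.mul_one]
    have hG : (∑ i ∈ Finset.range (n + 1), i) * 2 = (n + 1) * n := by
      simpa using Finset.sum_range_id_mul_two (n + 1)
    rw [hsplit]
    calc 6 * ((∑ a ∈ Finset.range (n + 1), a * (n + 1 - a))
          + (∑ a ∈ Finset.range (n + 1), a) + (n + 1))
        = 6 * (∑ a ∈ Finset.range (n + 1), a * (n + 1 - a))
          + 3 * ((∑ a ∈ Finset.range (n + 1), a) * 2) + 6 * (n + 1) := by ring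
      _ = n * (n + 1) * (n + 2) + 3 * ((n + 1) * n) + 6 * (n + 1) := by rw [ih, hG]
      _ = (n + 1) * (n + 1 + 1) * (n + 1 + 2) := by ring

lemma inner_sum (k a : ℕ) :
    ∑ b ∈ Finset.range (k + 1), (if 1 ≤ a + b ∧ a + b ≤ k then a else 0)
      = a * (k + 1 - a) := by
  rcases Nat.eq_zero_or_pos a with rfl | hpos
  · simp
  · rw [← Finset.sum_filter]
    have hf : Finset.filter (fun b => 1 ≤ a + b ∧ a + b ≤ k) (Finset.range (k + 1))
        = Finset.range (k + 1 - a) := by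
      ext b
      simp only [Finset.mem_filter, Finset.mem_range]
      omega
    rw [hf, Finset.sum_const, Finset.card_range, smul_eq_mul, mul_comm]

lemma sum_idx (k : ℕ) : ∑ α : Idx k, ((α.1.1 : ℕ)) = k * (k + 1) * (k + 2) / 6 := by
  classical
  have h1 : ∑ α : Idx k, ((α.1.1 : ℕ))
      = ∑ p ∈ Finset.filter
          (fun p : Fin (k + 1) × Fin (k + 1) =>
            1 ≤ (p.1 : ℕ) + (p.2 : ℕ) ∧ (p.1 : ℕ) + (p.2 : ℕ) ≤ k) Finset.univ,
          ((p.1 : ℕ)) := by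
    refine Finset.sum_bij' (fun (α : Idx k) _ => α.1)
      (fun p hp => (⟨p, (Finset.mem_filter.mp hp).2⟩ : Idx k)) ?_ ?_ ?_ ?_ ?_
    · intro α _
      exact Finset.mem_filter.mpr ⟨Finset.mem_univ _, α.2⟩
    · intro p hp; exact Finset.mem_univ _
    · intro α _; rfl
    · intro p hp; rfl
    · intro α _; rfl
  rw [h1, Finset.sum_filter, Fintype.sum_prod_type]
  have h2 : ∀ a : Fin (k + 1),
      (∑ b : Fin (k + 1), if 1 ≤ (a : ℕ) + (b : ℕ) ∧ (a : ℕ) + (b : ℕ) ≤ k then (a : ℕ) else 0)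
        = (a : ℕ) * (k + 1 - (a : ℕ)) := by
    intro a
    rw [Fin.sum_univ_eq_sum_range (fun b => if 1 ≤ (a : ℕ) + b ∧ (a : ℕ) + b ≤ k
      then (a : ℕ) else 0) (k + 1)]
    exact inner_sum k (a : ℕ)
  rw [Finset.sum_congr rfl fun a _ => h2 a,
    Fin.sum_univ_eq_sum_range (fun a => a * (k + 1 - a)) (k + 1)]
  have h6 := six_mul_sum k
  exact (Nat.div_eq_of_eq_mul_left (by norm_num) (by rw [← h6]; ring)).symm

lemma det_Mmat (k : ℕ) (θ w : ℝ) : (Mmat k θ w).det = 1 := by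
  classical
  have key : ∀ u v : ℕ, v < k + 2 → (u * (k + 2) + v) / (k + 2) = u := by
    intro u v hv
    rw [add_comm, Nat.add_mul_div_right _ _ (by omega : 0 < k + 2), Nat.div_eq_of_lt hv, zero_add]
  letI : LinearOrder (Idx k) :=
    LinearOrder.lift' (fun β : Idx k => (β.1.1 : ℕ) * (k + 2) + (β.1.2 : ℕ)) (by
      intro a b hab
      simp only at hab
      have ha2 : (a.1.2 : ℕ) < k + 2 := by have := a.1.2.isLt; omega
      have hb2 : (b.1.2 : ℕ) < k + 2 := by have := b.1.2.isLt; omega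
      have h1 : (a.1.1 : ℕ) = (b.1.1 : ℕ) := by
        rw [← key a.1.1 a.1.2 ha2, ← key b.1.1 b.1.2 hb2, hab]
      have h2 : (a.1.2 : ℕ) = (b.1.2 : ℕ) := by
        rw [h1] at hab
        exact Nat.add_left_cancel hab
      exact Subtype.ext (Prod.ext (Fin.ext h1) (Fin.ext h2)))
  rw [Matrix.det_of_upperTriangular (M := Mmat k θ w) ?_]
  · exact Finset.prod_eq_one fun α _ => mEnt_diag θ w _ _
  · intro i j hij
    have h2 : (j.1.1 : ℕ) * (k + 2) + (j.1.2 : ℕ) < (i.1.1 : ℕ) * (k + 2) + (i.1.2 : ℕ) := hij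
    rcases Nat.lt_trichotomy (j.1.1 : ℕ) (i.1.1 : ℕ) with h3 | h3 | h3
    · exact mEnt_zero₁ θ w h3 _ _
    · have h4 : (j.1.2 : ℕ) < (i.1.2 : ℕ) := by
        rw [h3] at h2
        exact Nat.lt_of_add_lt_add_left h2
      exact mEnt_zero₂ θ w h3.symm (by omega)
    · exfalso
      have h5 : ((i.1.1 : ℕ) + 1) * (k + 2) ≤ (j.1.1 : ℕ) * (k + 2) :=
        Nat.mul_le_mul_right _ h3
      have h6 : (i.1.2 : ℕ) ≤ k := by have := i.2.2; omega
      rw [add_mul, one_mul] at h5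
      omega

lemma mulVec_top (k : ℕ) (hk1 : 1 ≤ k) (θ w : ℝ) (x : Idx k → ℝ) :
    (Mmat k θ w).mulVec x (idxTop k hk1) = x (idxTop k hk1) := by
  have : (Mmat k θ w).mulVec x (idxTop k hk1)
      = ∑ β : Idx k, Mmat k θ w (idxTop k hk1) β * x β := rfl
  rw [this, Finset.sum_eq_single (idxTop k hk1)]
  · have hdiag : Mmat k θ w (idxTop k hk1) (idxTop k hk1) = 1 := mEnt_diag θ w k 0
    rw [hdiag, one_mul]
  · intro β _ hβ
    rcases Nat.lt_or_ge (β.1.1 : ℕ) k with h1 | h1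
    · have : Mmat k θ w (idxTop k hk1) β = 0 := mEnt_zero₁ θ w h1 _ _
      rw [this, zero_mul]
    · exfalso
      have hb1 : (β.1.1 : ℕ) = k := by have := β.1.1.isLt; omega
      have hb2 : (β.1.2 : ℕ) = 0 := by have := β.2.2; omega
      exact hβ (Subtype.ext (Prod.ext (Fin.ext hb1) (Fin.ext hb2)))
  · intro h
    exact absurd (Finset.mem_univ _) h

end OmegaProof

/-- Part of Lemma 6.1: for every `k ≥ 2` and `ε ∈ (0,1]` there are `c > 0` and
`λ₀ ≥ 1` such that for every `λ ≥ λ₀`, `θ ∈ [0, 1/100]` and `w ∈ [1/4, 3/4]`,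
the set `Ω(θ, w; λ, ε)` is measurable with `|Ω(θ, w; λ, ε)| ≥ c λ^{k(k+1)(k+2)/6}`. -/
theorem Omega_measure_lower_bound (k : ℕ) (hk : 2 ≤ k) (ε : ℝ) (hε : 0 < ε) (hε1 : ε ≤ 1) :
    ∃ c : ℝ, 0 < c ∧ ∃ lam₀ : ℝ, 1 ≤ lam₀ ∧
      ∀ lam : ℝ, lam₀ ≤ lam →
        ∀ θ ∈ Icc (0 : ℝ) (1 / 100), ∀ w ∈ Icc (1 / 4 : ℝ) (3 / 4),
          MeasurableSet (Omegaset k (le_trans one_le_two hk) θ w lam ε) ∧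
          ENNReal.ofReal (c * lam ^ (k * (k + 1) * (k + 2) / 6)) ≤
            volume (Omegaset k (le_trans one_le_two hk) θ w lam ε) := by
  classical
  have hk1 : (1 : ℕ) ≤ k := le_trans one_le_two hk
  have hkpos : (0 : ℝ) < (k : ℝ) + 1 := by positivity
  set top : Idx k := idxTop k (le_trans one_le_two hk) with htopdef
  set c : ℝ := ∏ α : Idx k, (if α = top then (2 : ℝ) ^ k - 1 else 2 * ε / ((k : ℝ) + 1))
    with hcdef
  have hcpos : 0 < c := by
    refine Finset.prod_pos fun α _ => ?_
    split_ifs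
    · have h2 : (1 : ℝ) < 2 ^ k := one_lt_pow₀ one_lt_two (by omega)
      linarith
    · positivity
  refine ⟨c, hcpos, 1, le_rfl, ?_⟩
  intro lam hlam θ hθ w hw
  have hlam0 : (0 : ℝ) < lam := lt_of_lt_of_le one_pos hlam
  constructor
  · -- measurability
    have hset : Omegaset k (le_trans one_le_two hk) θ w lam ε =
        {x : Idx k → ℝ | lam ^ k ≤ x top} ∩ ({x | x top ≤ (2 * lam) ^ k} ∩
        ((⋂ k' : ℕ, {x | 1 ≤ k' → k' ≤ k - 1 →
          ∑ j ∈ Finset.range (k + 1), |(gam k x θ w k').coeff j| ≤ ε * lam ^ k'}) ∩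
        {x | ∑ j ∈ Finset.Icc 1 k, |(gam k x θ w 0).coeff j| ≤ ε})) := by
      ext x
      simp only [Omegaset, Set.mem_setOf_eq, Set.mem_inter_iff, Set.mem_iInter,
        OmegaProof.norm1_gam_eq, OmegaProof.norm1_gam0_eq]
      all_goals tauto
    rw [hset]
    refine (measurableSet_le measurable_const (measurable_pi_apply top)).inter
      ((measurableSet_le (measurable_pi_apply top) measurable_const).inter
        ((MeasurableSet.iInter fun k' => ?_).inter
          (measurableSet_le (Finset.measurable_sum _ fun j _ =>
            (OmegaProof.measurable_gam_coeff k θ w 0 j).abs) measurable_const)))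
    by_cases h1 : 1 ≤ k' ∧ k' ≤ k - 1
    · have he : {x : Idx k → ℝ | 1 ≤ k' → k' ≤ k - 1 →
          ∑ j ∈ Finset.range (k + 1), |(gam k x θ w k').coeff j| ≤ ε * lam ^ k'}
          = {x | ∑ j ∈ Finset.range (k + 1), |(gam k x θ w k').coeff j| ≤ ε * lam ^ k'} := by
        ext x; simp [h1.1, h1.2]
      rw [he]
      exact measurableSet_le (Finset.measurable_sum _ fun j _ =>
        (OmegaProof.measurable_gam_coeff k θ w k' j).abs) measurable_const
    · have he : {x : Idx k → ℝ | 1 ≤ k' → k' ≤ k - 1 →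
          ∑ j ∈ Finset.range (k + 1), |(gam k x θ w k').coeff j| ≤ ε * lam ^ k'}
          = Set.univ := by
        ext x
        simp only [Set.mem_setOf_eq, Set.mem_univ, iff_true]
        intro h2 h3
        exact absurd ⟨h2, h3⟩ h1
      rw [he]
      exact MeasurableSet.univ
  · -- volume lower bound
    set lo : Idx k → ℝ := fun α =>
      if α = top then lam ^ k else -(ε * lam ^ (α.1.1 : ℕ) / ((k : ℝ) + 1)) with hlo
    set hi : Idx k → ℝ := fun α =>
      if α = top then (2 * lam) ^ k else ε * lam ^ (α.1.1 : ℕ) / ((k : ℝ) + 1) with hhi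
    have htopcoord : ((top.1.1 : ℕ)) = k := rfl
    have hb : ∀ α : Idx k, hi α - lo α
        = (if α = top then (2 : ℝ) ^ k - 1 else 2 * ε / ((k : ℝ) + 1)) * lam ^ (α.1.1 : ℕ) := by
      intro α
      by_cases hα : α = top
      · simp only [hhi, hlo, if_pos hα]
        have h2 : (α.1.1 : ℕ) = k := by rw [hα]; exact htopcoord
        rw [h2, mul_pow]; ring
      · simp only [hhi, hlo, if_neg hα]; ring
    have hblen : ∀ α : Idx k, 0 ≤ hi α - lo α := by
      intro α
      rw [hb α]
      have h2 : (1 : ℝ) < 2 ^ k := one_lt_pow₀ one_lt_two (by omega)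
      have h3 : (0:ℝ) ≤ lam ^ (α.1.1 : ℕ) := pow_nonneg hlam0.le _
      split_ifs
      · nlinarith
      · positivity
    set B : Set (Idx k → ℝ) := Set.pi Set.univ (fun α => Icc (lo α) (hi α)) with hB
    have hdet : LinearMap.det (Matrix.toLin' (OmegaProof.Mmat k θ w)) = 1 := by
      rw [LinearMap.det_toLin', OmegaProof.det_Mmat]
    have hsub : (⇑(Matrix.toLin' (OmegaProof.Mmat k θ w)) ⁻¹' B)
        ⊆ Omegaset k (le_trans one_le_two hk) θ w lam ε := by
      intro x hx
      have hy : ∀ α : Idx k,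
          (gam k x θ w (α.1.1 : ℕ)).coeff (α.1.2 : ℕ) ∈ Icc (lo α) (hi α) := by
        intro α
        have h := hx α (Set.mem_univ α)
        rwa [Matrix.toLin'_apply, OmegaProof.mulVec_eq] at h
      have hbox : ∀ (k' j : ℕ) (hk' : k' < k + 1) (hj : j < k + 1)
          (h1 : 1 ≤ k' + j) (h2 : k' + j ≤ k) (hne : k' ≠ k),
          |(gam k x θ w k').coeff j| ≤ ε * lam ^ k' / ((k : ℝ) + 1) := by
        intro k' j hk' hj h1 h2 hne
        set α : Idx k := ⟨(⟨k', hk'⟩, ⟨j, hj⟩), ⟨h1, h2⟩⟩ with hα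
        have hαtop : α ≠ top := by
          intro hcontra
          exact hne (by rw [← htopcoord, ← hcontra])
        have h := hy α
        simp only [hlo, hhi, if_neg hαtop] at h
        rw [abs_le]
        exact ⟨by linarith [h.1], h.2⟩
      refine ⟨?_, ?_, ?_, ?_⟩
      · have h := (hy top).1
        have h2 : (gam k x θ w (top.1.1 : ℕ)).coeff (top.1.2 : ℕ) = x top := by
          rw [← OmegaProof.mulVec_eq, htopdef, OmegaProof.mulVec_top]
        rw [h2] at h
        simpa only [hlo, if_pos rfl] using h
      · have h := (hy top).2
        have h2 : (gam k x θ w (top.1.1 : ℕ)).coeff (top.1.2 : ℕ) = x top := by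
          rw [← OmegaProof.mulVec_eq, htopdef, OmegaProof.mulVec_top]
        rw [h2] at h
        simpa only [hhi, if_pos rfl] using h
      · intro k' h1 h2
        have hk'k : k' < k := by omega
        rw [OmegaProof.norm1_gam_eq]
        have hbound : ∀ j ∈ Finset.range (k + 1),
            |(gam k x θ w k').coeff j| ≤ ε * lam ^ k' / ((k : ℝ) + 1) := by
          intro j hj
          rcases le_or_gt (k' + j) k with hle | hgt
          · exact hbox k' j (by omega) (Finset.mem_range.mp hj) (by omega) hle (by omega)
          · rw [OmegaProof.gam_coeff_zero k x θ w hgt, abs_zero]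
            positivity
        calc ∑ j ∈ Finset.range (k + 1), |(gam k x θ w k').coeff j|
            ≤ ∑ _j ∈ Finset.range (k + 1), ε * lam ^ k' / ((k : ℝ) + 1) :=
              Finset.sum_le_sum hbound
          _ = ((k : ℝ) + 1) * (ε * lam ^ k' / ((k : ℝ) + 1)) := by
              rw [Finset.sum_const, Finset.card_range, nsmul_eq_mul]
              push_cast
              ring
          _ = ε * lam ^ k' := by
              field_simp
      · rw [OmegaProof.norm1_gam0_eq]
        have hbound : ∀ j ∈ Finset.Icc 1 k,
            |(gam k x θ w 0).coeff j| ≤ ε / ((k : ℝ) + 1) := by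
          intro j hj
          simp only [Finset.mem_Icc] at hj
          have h := hbox 0 j (by omega) (by omega) (by omega) (by omega) (by omega)
          rwa [pow_zero, mul_one] at h
        calc ∑ j ∈ Finset.Icc 1 k, |(gam k x θ w 0).coeff j|
            ≤ ∑ _j ∈ Finset.Icc 1 k, ε / ((k : ℝ) + 1) := Finset.sum_le_sum hbound
          _ = (k : ℝ) * (ε / ((k : ℝ) + 1)) := by
              rw [Finset.sum_const, Nat.card_Icc, nsmul_eq_mul]
              push_cast
              ring
          _ ≤ ε := by
              rw [mul_div_assoc'] at *
              rw [div_le_iff₀ hkpos]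
              nlinarith
      done
    calc ENNReal.ofReal (c * lam ^ (k * (k + 1) * (k + 2) / 6))
        = ENNReal.ofReal (∏ α : Idx k, (hi α - lo α)) := by
          rw [Finset.prod_congr rfl (fun α _ => hb α), Finset.prod_mul_distrib,
            Finset.prod_pow_eq_pow_sum, OmegaProof.sum_idx, ← hcdef]
      _ = ∏ α : Idx k, volume (Icc (lo α) (hi α)) := by
          rw [ENNReal.ofReal_prod_of_nonneg fun α _ => hblen α]
          exact Finset.prod_congr rfl fun α _ => (Real.volume_Icc).symm
      _ = volume B := (volume_pi_pi _).symm
      _ = ENNReal.ofReal |((LinearMap.det (Matrix.toLin' (OmegaProof.Mmat k θ w)))⁻¹)|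
            * volume B := by
          rw [hdet]; simp
      _ = volume (⇑(Matrix.toLin' (OmegaProof.Mmat k θ w)) ⁻¹' B) :=
          (Measure.addHaar_preimage_linearMap volume (by rw [hdet]; norm_num) B).symm
      _ ≤ volume (Omegaset k (le_trans one_le_two hk) θ w lam ε) := measure_mono hsub
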